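/- arXiv:2012.04440 — 2 statements merged into one kernel-verified Lean document; each statement's English description precedes it below -/
import Mathlib

section
/- Fix a nonzero $f_0 \in \mathcal{S}(\mathbb{R})$ supported in $[3/4,1]$, set $N_n = 2^n - 1$ and $f_n = f_0(\cdot - N_n)$ for $n \ge 0$, and define $g_N = \mathcal{F}^{-1}\big(\sum_{n=0}^N e^{-iN_n \cdot} f_n\big)$. Then $\|g_N\|_1 \le (N+1)\|\mathcal{F}^{-1}(f_0)\|_1$ and $\sup_{N\ge 0} \|g_N\|_\infty < \infty$; consequently for each $1 < p < \infty$ there is a constant $K$ with $\|g_N\|_p \le K N^{1/p}$ for all $N \ge 1$. -/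
open MeasureTheory Complex

private lemma aux_summable_H : Summable (fun k : ℤ => 4 / (1 + (k : ℝ) ^ 2)) := by
  have hnat : Summable (fun n : ℕ => 4 / (1 + (n : ℝ) ^ 2)) := by
    have h1 : Summable (fun n : ℕ => 1 / ((n : ℝ) + 1) ^ 2) := by
      have h0 := (summable_nat_add_iff (f := fun n : ℕ => 1 / (n : ℝ) ^ 2) 1).mpr
        (Real.summable_one_div_nat_pow.mpr one_lt_two)
      simpa using h0
    refine (h1.mul_left 8).of_nonneg_of_le (fun n => by positivity) (fun n => ?_)
    rw [mul_one_div, div_le_div_iff₀ (by positivity) (by positivity)]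
    nlinarith [sq_nonneg ((n : ℝ) - 1)]
  refine Summable.of_nat_of_neg (by simpa using hnat) ?_
  simpa using hnat

private lemma aux_sum_bound (a : ℕ → ℝ) (ha : ∀ m n, m < n → a m + 1 ≤ a n) :
    ∃ T : ℝ, 0 ≤ T ∧ ∀ (t : ℝ) (s : Finset ℕ),
      ∑ n ∈ s, 1 / (1 + (t - a n) ^ 2) ≤ T := by
  refine ⟨∑' k : ℤ, 4 / (1 + (k : ℝ) ^ 2), tsum_nonneg (fun k => by positivity), fun t s => ?_⟩
  set H : ℤ → ℝ := fun k => 4 / (1 + (k : ℝ) ^ 2) with hH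
  set φ : ℕ → ℤ := fun n => ⌈a n - t⌉ with hφ
  have hstep : ∀ m n : ℕ, m < n → φ m + 1 ≤ φ n := by
    intro m n h
    have h1 := ha m n h
    have : (⌈(a m - t) + ((1 : ℤ) : ℝ)⌉ : ℤ) ≤ ⌈a n - t⌉ := by
      apply Int.ceil_le_ceil; push_cast; linarith
    rw [Int.ceil_add_intCast] at this
    exact this
  have hinj : Set.InjOn φ s := by
    intro m _ n _ hmn
    rcases lt_trichotomy m n with h | h | h
    · have := hstep m n h; omega
    · exact h
    · have := hstep n m h; omega
  calc ∑ n ∈ s, 1 / (1 + (t - a n) ^ 2) ≤ ∑ n ∈ s, H (φ n) := by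
        refine Finset.sum_le_sum (fun n _ => ?_)
        have h1 : (a n - t) ≤ (φ n : ℝ) := Int.le_ceil _
        have h2 : ((φ n : ℝ)) < (a n - t) + 1 := Int.ceil_lt_add_one _
        have habs : |(φ n : ℝ)| ≤ |a n - t| + 1 := by
          rw [abs_le]
          constructor
          · linarith [neg_abs_le (a n - t)]
          · linarith [le_abs_self (a n - t)]
        have hk : 1 + (φ n : ℝ) ^ 2 ≤ 4 * (1 + (t - a n) ^ 2) := by
          have e1 : (t - a n) ^ 2 = |a n - t| ^ 2 := by
            rw [_root_.sq_abs]; ring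
          nlinarith [sq_nonneg (|a n - t| - 1), abs_nonneg (a n - t),
            abs_nonneg ((φ n : ℝ)), _root_.sq_abs ((φ n : ℝ))]
        rw [hH, div_le_div_iff₀ (by positivity) (by positivity)]
        nlinarith [sq_nonneg (t - a n)]
    _ = ∑ k ∈ s.image φ, H k := (Finset.sum_image (fun m hm n hn h => hinj hm hn h)).symm
    _ ≤ ∑' k : ℤ, H k := Summable.sum_le_tsum _ (fun k _ => by positivity) aux_summable_H

private lemma aux_schwartz_bound (F : SchwartzMap ℝ ℂ) :
    ∃ C : ℝ, 0 ≤ C ∧ ∀ x : ℝ, ‖F x‖ ≤ C / (1 + x ^ 2) := by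
  obtain ⟨C₀, hC₀pos, hC₀⟩ := F.decay 0 0
  obtain ⟨C₂, hC₂pos, hC₂⟩ := F.decay 2 0
  refine ⟨C₀ + C₂, by positivity, fun x => ?_⟩
  have h0 := hC₀ x
  have h2 := hC₂ x
  rw [norm_iteratedFDeriv_zero] at h0 h2
  simp only [pow_zero, one_mul] at h0
  rw [Real.norm_eq_abs] at h2
  rw [le_div_iff₀ (by positivity)]
  nlinarith [norm_nonneg (F x), _root_.sq_abs x, sq_nonneg x]

set_option maxHeartbeats 1000000 in
/-- Lemma 5.5 (construction): fix a nonzero `f₀ ∈ 𝒮(ℝ)` supported in `[3/4, 1]`, set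
`N_n = 2ⁿ - 1`, `f_n = f₀(· - N_n)` and
`g_N = 𝓕⁻¹(∑_{n=0}^N e^{-iN_n ·} f_n)`.  Then `‖g_N‖₁ ≤ (N+1) ‖𝓕⁻¹(f₀)‖₁`,
`sup_N ‖g_N‖_∞ < ∞`, and for each `1 < p < ∞` there is `K` with
`‖g_N‖_p ≤ K N^{1/p}` for `N ≥ 1`. -/
theorem stmt17 (f₀ : SchwartzMap ℝ ℂ) (hne : f₀ ≠ 0)
    (hsupp : tsupport (fun t => f₀ t) ⊆ Set.Icc (3 / 4 : ℝ) 1)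
    (g : ℕ → ℝ → ℂ)
    (hg : ∀ (N : ℕ) (t : ℝ),
      g N t = (1 / (2 * (Real.pi : ℂ))) *
        ∫ u : ℝ,
          (∑ n ∈ Finset.range (N + 1),
            Complex.exp (-(Complex.I * (((2 : ℝ) ^ n - 1 : ℝ) : ℂ) * u)) *
              f₀ (u - ((2 : ℝ) ^ n - 1))) * Complex.exp (Complex.I * t * u))
    (g₀ : ℝ → ℂ)
    (hg₀ : ∀ t : ℝ,
      g₀ t = (1 / (2 * (Real.pi : ℂ))) * ∫ u : ℝ, f₀ u * Complex.exp (Complex.I * t * u)) :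
    (∀ N : ℕ, (∫ t : ℝ, ‖g N t‖) ≤ (N + 1) * ∫ t : ℝ, ‖g₀ t‖) ∧
    (∃ M : ℝ, ∀ (N : ℕ) (t : ℝ), ‖g N t‖ ≤ M) ∧
    (∀ p : ℝ, 1 < p →
      ∃ K : ℝ, ∀ N : ℕ, 1 ≤ N →
        (eLpNorm (g N) (ENNReal.ofReal p) volume).toReal ≤ K * (N : ℝ) ^ (1 / p)) := by
  set A : ℕ → ℝ := fun n => 2 ^ n - 1 with hAdef
  have hexp1 : ∀ x y : ℝ, ‖Complex.exp (-(Complex.I * (x : ℂ) * (y : ℂ)))‖ = 1 := by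
    intro x y
    rw [Complex.norm_exp]
    norm_num [Complex.mul_re]
  have hexp2 : ∀ x y : ℝ, ‖Complex.exp (Complex.I * (x : ℂ) * (y : ℂ))‖ = 1 := by
    intro x y
    rw [Complex.norm_exp]
    norm_num [Complex.mul_re]
  -- integrability of each summand
  have hterm_int : ∀ (a t : ℝ), Integrable (fun u : ℝ =>
      Complex.exp (-(Complex.I * (a : ℂ) * u)) * f₀ (u - a) * Complex.exp (Complex.I * t * u)) := by
    intro a t
    have hbase : Integrable (fun u : ℝ => ‖f₀ (u - a)‖) := (f₀.integrable.comp_sub_right a).norm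
    refine hbase.mono' ?_ ?_
    · refine Continuous.aestronglyMeasurable ?_
      exact ((Complex.continuous_exp.comp (by fun_prop)).mul
        (f₀.continuous.comp (by fun_prop))).mul (Complex.continuous_exp.comp (by fun_prop))
    · filter_upwards with u
      rw [norm_mul, norm_mul, hexp1, hexp2, one_mul, mul_one]
  -- the key identity
  have hkey : ∀ (N : ℕ) (t : ℝ), g N t =
      ∑ n ∈ Finset.range (N + 1),
        Complex.exp (Complex.I * ((t - A n : ℝ) : ℂ) * ((A n : ℝ) : ℂ)) * g₀ (t - A n) := by
    intro N t
    rw [hg N t]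
    simp_rw [Finset.sum_mul]
    rw [integral_finset_sum _ (fun n _ => hterm_int (A n) t), Finset.mul_sum]
    refine Finset.sum_congr rfl (fun n _ => ?_)
    rw [hg₀ (t - A n)]
    have hshift : (fun u : ℝ =>
        Complex.exp (-(Complex.I * ((A n : ℝ) : ℂ) * u)) * f₀ (u - A n) *
          Complex.exp (Complex.I * t * u)) =
        (fun v : ℝ =>
          Complex.exp (Complex.I * ((t - A n : ℝ) : ℂ) * ((A n : ℝ) : ℂ)) *
            (f₀ v * Complex.exp (Complex.I * ((t - A n : ℝ) : ℂ) * v))) ∘ (fun u => u - A n) := by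
      funext u
      simp only [Function.comp_apply]
      rw [show Complex.exp (Complex.I * ((t - A n : ℝ) : ℂ) * ((A n : ℝ) : ℂ)) *
          (f₀ (u - A n) * Complex.exp (Complex.I * ((t - A n : ℝ) : ℂ) * ((u - A n : ℝ) : ℂ))) =
          Complex.exp (Complex.I * ((t - A n : ℝ) : ℂ) * ((A n : ℝ) : ℂ) +
            Complex.I * ((t - A n : ℝ) : ℂ) * ((u - A n : ℝ) : ℂ)) * f₀ (u - A n) from by
        rw [Complex.exp_add]; ring]
      rw [show Complex.exp (-(Complex.I * ((A n : ℝ) : ℂ) * u)) * f₀ (u - A n) *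
          Complex.exp (Complex.I * t * u) =
          Complex.exp (-(Complex.I * ((A n : ℝ) : ℂ) * u) + Complex.I * t * u) * f₀ (u - A n)
          from by rw [Complex.exp_add]; ring]
      congr 2
      push_cast
      ring
    have hint_eq : (∫ u : ℝ, Complex.exp (-(Complex.I * ((A n : ℝ) : ℂ) * u)) * f₀ (u - A n) *
          Complex.exp (Complex.I * t * u)) =
        ∫ v : ℝ, Complex.exp (Complex.I * ((t - A n : ℝ) : ℂ) * ((A n : ℝ) : ℂ)) *
          (f₀ v * Complex.exp (Complex.I * ((t - A n : ℝ) : ℂ) * v)) := by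
      rw [hshift]
      exact integral_sub_right_eq_self (μ := volume) (fun v : ℝ =>
        Complex.exp (Complex.I * ((t - A n : ℝ) : ℂ) * ((A n : ℝ) : ℂ)) *
          (f₀ v * Complex.exp (Complex.I * ((t - A n : ℝ) : ℂ) * v))) (A n)
    rw [hint_eq, integral_const_mul]
    push_cast
    ring
  -- properties of g₀
  set F : SchwartzMap ℝ ℂ := SchwartzMap.fourierTransformCLM ℂ f₀ with hF
  have hg₀F : ∀ t : ℝ, g₀ t = (1 / (2 * (Real.pi : ℂ))) * F (-(t / (2 * Real.pi))) := by
    intro t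
    rw [hg₀ t]
    congr 1
    have : F (-(t / (2 * Real.pi))) =
        FourierTransform.fourier (fun x : ℝ => f₀ x) (-(t / (2 * Real.pi))) := rfl
    rw [this, Real.fourier_real_eq_integral_exp_smul]
    refine integral_congr_ae (Filter.Eventually.of_forall (fun u => ?_))
    simp only [smul_eq_mul]
    rw [mul_comm]
    congr 1
    have hπ : (Real.pi : ℝ) ≠ 0 := Real.pi_ne_zero
    congr 1
    push_cast
    field_simp
  obtain ⟨C, hC0, hC⟩ := aux_schwartz_bound F
  have hπpos := Real.pi_pos
  have hg₀cont : Continuous g₀ := by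
    rw [show g₀ = fun t => (1 / (2 * (Real.pi : ℂ))) * F (-(t / (2 * Real.pi))) from
      funext hg₀F]
    exact continuous_const.mul (F.continuous.comp (by fun_prop))
  have hnormc : ‖(1 / (2 * (Real.pi : ℂ)))‖ = 1 / (2 * Real.pi) := by
    rw [norm_div, norm_one]
    congr 1
    rw [show (2 * (Real.pi : ℂ)) = ((2 * Real.pi : ℝ) : ℂ) by push_cast; ring,
      Complex.norm_real, Real.norm_eq_abs, abs_of_pos (by positivity)]
  set D : ℝ := 2 * Real.pi * C with hDdef
  have hD0 : 0 ≤ D := by positivity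
  have hg₀bd : ∀ s : ℝ, ‖g₀ s‖ ≤ D / (1 + s ^ 2) := by
    intro s
    rw [hg₀F s, norm_mul, hnormc]
    have h1 : ‖F (-(s / (2 * Real.pi)))‖ ≤ C / (1 + (-(s / (2 * Real.pi))) ^ 2) := hC _
    have h2 : 1 / (2 * Real.pi) * (C / (1 + (-(s / (2 * Real.pi))) ^ 2)) =
        2 * Real.pi * C / (4 * Real.pi ^ 2 + s ^ 2) := by
      rw [neg_pow]
      field_simp
      ring
    have h3 : 2 * Real.pi * C / (4 * Real.pi ^ 2 + s ^ 2) ≤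
        2 * Real.pi * C / (1 + s ^ 2) := by
      apply div_le_div_of_nonneg_left (by positivity) (by positivity)
      nlinarith [Real.pi_gt_three]
    calc 1 / (2 * Real.pi) * ‖F (-(s / (2 * Real.pi)))‖
        ≤ 1 / (2 * Real.pi) * (C / (1 + (-(s / (2 * Real.pi))) ^ 2)) := by
          apply mul_le_mul_of_nonneg_left h1 (by positivity)
      _ ≤ 2 * Real.pi * C / (1 + s ^ 2) := by rw [h2]; exact h3
  have hg₀int : Integrable g₀ := by
    refine Integrable.mono' ((integrable_inv_one_add_sq).const_mul D) ?_ ?_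
    · exact hg₀cont.aestronglyMeasurable
    · filter_upwards with s
      calc ‖g₀ s‖ ≤ D / (1 + s ^ 2) := hg₀bd s
        _ = D * (1 + s ^ 2)⁻¹ := by rw [div_eq_mul_inv]
  -- translated copies of g₀
  have hgtrans : ∀ a : ℝ, Integrable (fun t => g₀ (t - a)) := fun a =>
    hg₀int.comp_sub_right a
  set C₁ : ℝ := ∫ t : ℝ, ‖g₀ t‖ with hC₁def
  have hC₁0 : 0 ≤ C₁ := integral_nonneg (fun _ => norm_nonneg _)
  have hgNint : ∀ N : ℕ, Integrable (g N) := by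
    intro N
    rw [show g N = fun t => ∑ n ∈ Finset.range (N + 1),
        Complex.exp (Complex.I * ((t - A n : ℝ) : ℂ) * ((A n : ℝ) : ℂ)) * g₀ (t - A n) from
      funext (hkey N)]
    refine integrable_finset_sum _ (fun n _ => ?_)
    refine ((hgtrans (A n)).norm).mono' ?_ ?_
    · exact ((Complex.continuous_exp.comp (by fun_prop)).mul
        (hg₀cont.comp (by fun_prop))).aestronglyMeasurable
    · filter_upwards with t
      rw [norm_mul, hexp2, one_mul]
  have hptw : ∀ (N : ℕ) (t : ℝ), ‖g N t‖ ≤ ∑ n ∈ Finset.range (N + 1), ‖g₀ (t - A n)‖ := by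
    intro N t
    rw [hkey N t]
    refine (norm_sum_le _ _).trans (Finset.sum_le_sum (fun n _ => ?_))
    rw [norm_mul, hexp2, one_mul]
  -- Part 1
  have hpart1 : ∀ N : ℕ, (∫ t : ℝ, ‖g N t‖) ≤ (N + 1) * C₁ := by
    intro N
    have hsint : Integrable (fun t => ∑ n ∈ Finset.range (N + 1), ‖g₀ (t - A n)‖) :=
      integrable_finset_sum _ (fun n _ => (hgtrans (A n)).norm)
    calc (∫ t : ℝ, ‖g N t‖) ≤ ∫ t : ℝ, ∑ n ∈ Finset.range (N + 1), ‖g₀ (t - A n)‖ :=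
          integral_mono (hgNint N).norm hsint (hptw N)
      _ = ∑ n ∈ Finset.range (N + 1), ∫ t : ℝ, ‖g₀ (t - A n)‖ :=
          integral_finset_sum _ (fun n _ => (hgtrans (A n)).norm)
      _ = ∑ _n ∈ Finset.range (N + 1), C₁ :=
          Finset.sum_congr rfl (fun n _ =>
            integral_sub_right_eq_self (μ := volume) (fun t => ‖g₀ t‖) (A n))
      _ = (N + 1) * C₁ := by
          rw [Finset.sum_const, Finset.card_range, nsmul_eq_mul]
          push_cast
          ring
  -- separation of the translation points
  have hAsep : ∀ m n : ℕ, m < n → A m + 1 ≤ A n := by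
    intro m n h
    have h1 : (2 : ℝ) ^ m * 2 ≤ 2 ^ n := by
      rw [← pow_succ]
      apply pow_le_pow_right₀ one_le_two
      omega
    have h3 : (1 : ℝ) ≤ 2 ^ m := one_le_pow₀ one_le_two
    simp only [hAdef]
    linarith
  obtain ⟨T, hT0, hT⟩ := aux_sum_bound A hAsep
  -- Part 2 bound
  have hM : ∀ (N : ℕ) (t : ℝ), ‖g N t‖ ≤ D * T := by
    intro N t
    refine (hptw N t).trans ?_
    calc ∑ n ∈ Finset.range (N + 1), ‖g₀ (t - A n)‖
        ≤ ∑ n ∈ Finset.range (N + 1), D * (1 / (1 + (t - A n) ^ 2)) := by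
          refine Finset.sum_le_sum (fun n _ => ?_)
          rw [mul_one_div]
          exact hg₀bd (t - A n)
      _ = D * ∑ n ∈ Finset.range (N + 1), 1 / (1 + (t - A n) ^ 2) := by
          rw [Finset.mul_sum]
      _ ≤ D * T := mul_le_mul_of_nonneg_left (hT t _) hD0
  refine ⟨hpart1, ⟨D * T, hM⟩, ?_⟩
  -- Part 3
  intro p hp
  have hp0 : (0 : ℝ) < p := lt_trans one_pos hp
  have hM0 : (0 : ℝ) ≤ D * T := mul_nonneg hD0 hT0
  refine ⟨((D * T) ^ (p - 1) * (2 * C₁)) ^ (1 / p), fun N hN => ?_⟩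
  have hq0 : ENNReal.ofReal p ≠ 0 := by
    rw [Ne, ENNReal.ofReal_eq_zero]
    linarith
  have hqt : ENNReal.ofReal p ≠ ⊤ := ENNReal.ofReal_ne_top
  rw [eLpNorm_eq_lintegral_rpow_enorm_toReal hq0 hqt, ENNReal.toReal_ofReal hp0.le]
  have h2C₁ : (0 : ℝ) ≤ 2 * C₁ := by linarith
  have hKnn : (0 : ℝ) ≤ ((D * T) ^ (p - 1) * (2 * C₁)) ^ (1 / p) :=
    Real.rpow_nonneg (mul_nonneg (Real.rpow_nonneg hM0 _) h2C₁) _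
  apply ENNReal.toReal_le_of_le_ofReal
    (mul_nonneg hKnn (Real.rpow_nonneg (Nat.cast_nonneg N) _))
  have hN1 : (1 : ℝ) ≤ (N : ℝ) := by exact_mod_cast hN
  have step1 : (∫⁻ t : ℝ, (‖g N t‖₊ : ENNReal) ^ p) ≤
      ENNReal.ofReal ((D * T) ^ (p - 1) * (2 * C₁ * N)) := by
    calc (∫⁻ t : ℝ, (‖g N t‖₊ : ENNReal) ^ p)
        ≤ ∫⁻ t : ℝ, ENNReal.ofReal (D * T) ^ (p - 1) * (‖g N t‖₊ : ENNReal) := by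
          refine lintegral_mono (fun t => ?_)
          have hsplit : (‖g N t‖₊ : ENNReal) ^ p =
              (‖g N t‖₊ : ENNReal) ^ (p - 1) * (‖g N t‖₊ : ENNReal) ^ (1 : ℝ) := by
            rw [← ENNReal.rpow_add_of_nonneg _ _ (by linarith) zero_le_one]
            norm_num
          rw [hsplit, ENNReal.rpow_one]
          refine mul_le_mul_left (ENNReal.rpow_le_rpow ?_ (by linarith)) _
          rw [show ((‖g N t‖₊ : ENNReal)) = ENNReal.ofReal ‖g N t‖ from (ofReal_norm _).symm]
          exact ENNReal.ofReal_le_ofReal (hM N t)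
      _ = ENNReal.ofReal (D * T) ^ (p - 1) * ∫⁻ t : ℝ, (‖g N t‖₊ : ENNReal) :=
          lintegral_const_mul' _ _
            (ENNReal.rpow_ne_top_of_nonneg (by linarith) ENNReal.ofReal_ne_top)
      _ = ENNReal.ofReal (D * T) ^ (p - 1) * ENNReal.ofReal (∫ t : ℝ, ‖g N t‖) := by
          rw [ofReal_integral_norm_eq_lintegral_enorm (hgNint N)]; rfl
      _ ≤ ENNReal.ofReal (D * T) ^ (p - 1) * ENNReal.ofReal (2 * C₁ * N) := by
          refine mul_le_mul_right (ENNReal.ofReal_le_ofReal ?_) _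
          have := hpart1 N
          nlinarith
      _ = ENNReal.ofReal ((D * T) ^ (p - 1) * (2 * C₁ * N)) := by
          rw [ENNReal.ofReal_mul (Real.rpow_nonneg hM0 _),
            ENNReal.ofReal_rpow_of_nonneg hM0 (by linarith)]
  refine le_trans (ENNReal.rpow_le_rpow step1 (one_div_nonneg.mpr hp0.le)) ?_
  rw [ENNReal.ofReal_rpow_of_nonneg
    (mul_nonneg (Real.rpow_nonneg hM0 _) (mul_nonneg h2C₁ (Nat.cast_nonneg N))) (one_div_nonneg.mpr hp0.le)]
  apply ENNReal.ofReal_le_ofReal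
  rw [show (D * T) ^ (p - 1) * (2 * C₁ * N) = ((D * T) ^ (p - 1) * (2 * C₁)) * N by ring,
    Real.mul_rpow (mul_nonneg (Real.rpow_nonneg hM0 _) h2C₁) (Nat.cast_nonneg N)]
end

section
/- Let $X$ be a Banach space and $-A$ the generator of a bounded $C_0$-semigroup $(T_t)_{t\ge 0}$ on $X$. Then for every $b \in L^1(\mathbb{R}_+)$ and every $\varepsilon > 0$, the operator $L_b(A + \varepsilon)$ defined by the half-plane holomorphic functional calculus equals the Hille–Phillips operator $\Gamma(A+\varepsilon, b) = \int_0^\infty b(t) e^{-\varepsilon t} T_t\, dt$. -/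
open MeasureTheory Complex Set Real FourierTransform RealInnerProductSpace

lemma aux_texp_le {a t : ℝ} (ha : 0 < a) (ht : 0 ≤ t) :
    t * Real.exp (-a * t) ≤ (2/a) * Real.exp (-(a/2) * t) := by
  have h1 : a/2 * t ≤ Real.exp (a/2 * t) := by
    have := Real.add_one_le_exp (a/2 * t); linarith
  have h2 : t ≤ (2/a) * Real.exp (a/2 * t) := by
    rw [div_mul_eq_mul_div, le_div_iff₀ ha]
    calc t * a = 2 * (a/2*t) := by ring
    _ ≤ 2 * Real.exp (a/2*t) := by linarith
  calc t * Real.exp (-a*t) ≤ ((2/a) * Real.exp (a/2*t)) * Real.exp (-a*t) := by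
        apply mul_le_mul_of_nonneg_right h2 (Real.exp_nonneg _)
  _ = (2/a) * Real.exp (-(a/2)*t) := by
        rw [mul_assoc, ← Real.exp_add]; ring_nf

lemma aux_int_texp {a : ℝ} (ha : 0 < a) :
    IntegrableOn (fun t : ℝ => t * Real.exp (-a * t)) (Ioi 0) := by
  apply Integrable.mono' ((exp_neg_integrableOn_Ioi 0 (by linarith : 0 < a/2)).const_mul (2/a))
  · exact ((continuous_id.mul (Real.continuous_exp.comp (continuous_const.mul continuous_id))).aestronglyMeasurable).restrict
  · filter_upwards [ae_restrict_mem measurableSet_Ioi] with t ht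
    rw [Real.norm_eq_abs, _root_.abs_of_nonneg (mul_nonneg (le_of_lt ht) (Real.exp_nonneg _))]
    simpa using aux_texp_le ha (le_of_lt ht)

lemma aux_int_cexp_t {z : ℂ} (hz : 0 < z.re) :
    IntegrableOn (fun t : ℝ => (t:ℂ) * Complex.exp (-(z * t))) (Ioi 0) := by
  apply Integrable.mono' (aux_int_texp hz)
  · exact ((Complex.continuous_ofReal.mul (Complex.continuous_exp.comp
      (continuous_const.mul Complex.continuous_ofReal).neg)).aestronglyMeasurable).restrict
  · filter_upwards [ae_restrict_mem measurableSet_Ioi] with t ht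
    rw [norm_mul, Complex.norm_exp]
    simp only [Complex.norm_real, Real.norm_eq_abs, _root_.abs_of_nonneg (le_of_lt (mem_Ioi.1 ht))]
    have : (-(z * t)).re = -z.re * t := by simp [Complex.mul_re]
    rw [this]

lemma laplace_one {z : ℂ} (hz : 0 < z.re) :
    IntegrableOn (fun t : ℝ => Complex.exp (-(z * t))) (Ioi 0) := by
  apply Integrable.mono' (exp_neg_integrableOn_Ioi 0 hz)
  · exact ((Complex.continuous_exp.comp
      (continuous_const.mul Complex.continuous_ofReal).neg).aestronglyMeasurable).restrict
  · filter_upwards with t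
    rw [Complex.norm_exp]
    exact le_of_eq (by congr 1; simp [Complex.mul_re])

lemma laplace_id {z : ℂ} (hz : 0 < z.re) :
    ∫ t in Ioi (0:ℝ), (t:ℂ) * Complex.exp (-(z * t)) = (z⁻¹)^2 := by
  have hz0 : z ≠ 0 := fun h => by simp [h] at hz
  set F : ℝ → ℂ := fun t => -((t:ℂ) * z⁻¹ + z⁻¹^2) * Complex.exp (-(z * t)) with hF
  have hderiv : ∀ t : ℝ, HasDerivAt F ((t:ℂ) * Complex.exp (-(z * t))) t := by
    intro t
    have h1 : HasDerivAt (fun t : ℝ => -((t:ℂ) * z⁻¹ + z⁻¹^2)) (-z⁻¹) t := by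
      have := ((Complex.ofRealCLM.hasDerivAt (x := t)).mul_const z⁻¹).add_const (z⁻¹^2)
      exact this.neg.congr_deriv (by simp)
    have h2 : HasDerivAt (fun t : ℝ => Complex.exp (-(z * t))) (-z * Complex.exp (-(z * t))) t := by
      have hin : HasDerivAt (fun t : ℝ => -(z * (t:ℂ))) (-z) t := by
        exact ((Complex.ofRealCLM.hasDerivAt (x := t)).const_mul z).neg.congr_deriv (by simp)
      simpa [mul_comm] using hin.cexp
    have := h1.mul h2
    refine this.congr_deriv ?_
    field_simp
    ring
  have hlim : Filter.Tendsto F Filter.atTop (nhds 0) := by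
    rw [tendsto_zero_iff_norm_tendsto_zero]
    have hbound : ∀ᶠ t in Filter.atTop, ‖F t‖ ≤ (‖z⁻¹‖ * t + ‖z⁻¹^2‖) * Real.exp (-z.re * t) := by
      filter_upwards [Filter.eventually_ge_atTop (0:ℝ)] with t ht
      rw [hF]
      simp only [norm_neg, norm_mul]
      apply mul_le_mul
      · calc ‖(t:ℂ) * z⁻¹ + z⁻¹^2‖ ≤ ‖(t:ℂ) * z⁻¹‖ + ‖z⁻¹^2‖ := norm_add_le _ _
        _ ≤ ‖z⁻¹‖ * t + ‖z⁻¹^2‖ := by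
            rw [norm_mul, Complex.norm_real, Real.norm_eq_abs, _root_.abs_of_nonneg ht, mul_comm]
      · rw [Complex.norm_exp]
        exact le_of_eq (by congr 1; simp [Complex.mul_re])
      · exact norm_nonneg _
      · positivity
    apply squeeze_zero_norm' (by simpa using hbound)
    have h1 : Filter.Tendsto (fun t : ℝ => ‖z⁻¹‖ * (t * Real.exp (-z.re * t))) Filter.atTop (nhds 0) := by
      have : Filter.Tendsto (fun t : ℝ => t * Real.exp (-z.re * t)) Filter.atTop (nhds 0) := by
        have h := Real.tendsto_pow_mul_exp_neg_atTop_nhds_zero 1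
        have hcomp := h.comp (Filter.tendsto_id.const_mul_atTop hz : Filter.Tendsto (fun t : ℝ => z.re * t) Filter.atTop Filter.atTop)
        have := hcomp.const_mul (z.re)⁻¹
        simp only [mul_zero] at this
        convert this using 2 with t
        simp only [Function.comp_apply, pow_one]
        field_simp
      simpa using this.const_mul ‖z⁻¹‖
    have h2 : Filter.Tendsto (fun t : ℝ => ‖z⁻¹^2‖ * Real.exp (-z.re * t)) Filter.atTop (nhds 0) := by
      have : Filter.Tendsto (fun t : ℝ => Real.exp (-z.re * t)) Filter.atTop (nhds 0) := by
        apply Real.tendsto_exp_atBot.comp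
        exact Filter.Tendsto.congr (fun t => by simp [neg_mul])
          (Filter.tendsto_neg_atTop_atBot.comp (Filter.tendsto_id.const_mul_atTop hz))
      have := this.const_mul ‖z⁻¹^2‖
      simpa using this
    have := h1.add h2
    simp only [add_zero] at this
    apply this.congr
    intro t
    simp [map_inv₀, map_pow]
    ring
  have h0 : ContinuousWithinAt F (Ici 0) 0 := by
    apply Continuous.continuousWithinAt
    exact ((Complex.continuous_ofReal.mul continuous_const).add continuous_const).neg.mul
      (Complex.continuous_exp.comp (continuous_const.mul Complex.continuous_ofReal).neg)
  have := integral_Ioi_of_hasDerivAt_of_tendsto h0 (fun t _ => hderiv t) (aux_int_cexp_t hz) hlim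
  rw [this, hF]
  simp

noncomputable def fmax (a : ℝ) : ℝ → ℂ :=
  fun t => ((max t 0 : ℝ) : ℂ) * Complex.exp (-((a:ℂ) * (max t 0 : ℝ)))

lemma fmax_eq_indicator (a : ℝ) :
    fmax a = Set.indicator (Ioi 0) (fun t : ℝ => (t:ℂ) * Complex.exp (-((a:ℂ) * t))) := by
  funext t
  rcases lt_or_ge 0 t with h | h
  · rw [Set.indicator_of_mem (mem_Ioi.2 h), fmax, max_eq_left h.le]
  · rw [Set.indicator_of_notMem (by simpa using h), fmax, max_eq_right h]
    simp

lemma fmax_cont (a : ℝ) : Continuous (fmax a) := by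
  apply Continuous.mul
  · exact Complex.continuous_ofReal.comp (continuous_id.max continuous_const)
  · exact Complex.continuous_exp.comp (((continuous_const.mul
      (Complex.continuous_ofReal.comp (continuous_id.max continuous_const)))).neg)

lemma fmax_int {a : ℝ} (ha : 0 < a) : Integrable (fmax a) := by
  rw [fmax_eq_indicator]
  rw [integrable_indicator_iff measurableSet_Ioi]
  exact aux_int_cexp_t (by simpa using ha)

lemma fourier_fmax {a : ℝ} (ha : 0 < a) (s : ℝ) :
    𝓕 (fmax a) s = (((a : ℂ) + (2 * π * s) * Complex.I)⁻¹)^2 := by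
  rw [Real.fourier_eq']
  have : ∀ t : ℝ, Complex.exp (((-2 * π * (inner ℝ t s : ℝ) : ℝ) : ℂ) * Complex.I) • fmax a t
      = Set.indicator (Ioi 0) (fun t : ℝ => (t:ℂ) *
          Complex.exp (-(((a:ℂ) + (2 * π * s) * Complex.I) * t))) t := by
    intro t
    rw [fmax_eq_indicator]
    rcases lt_or_ge 0 t with h | h
    · rw [Set.indicator_of_mem (mem_Ioi.2 h), Set.indicator_of_mem (mem_Ioi.2 h), smul_eq_mul]
      rw [mul_comm, mul_assoc, ← Complex.exp_add]
      congr 2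
      have : (inner ℝ t s : ℝ) = t * s := inner_apply t s
      rw [this]
      push_cast
      ring
    · rw [Set.indicator_of_notMem (by simpa using h), Set.indicator_of_notMem (by simpa using h)]
      simp
  rw [MeasureTheory.integral_congr_ae (Filter.Eventually.of_forall this),
    MeasureTheory.integral_indicator measurableSet_Ioi,
    laplace_id (by simpa using ha)]

lemma norm_res_sq {a : ℝ} (ha : 0 < a) (y : ℝ) :
    ‖(((a : ℂ) + y * Complex.I)⁻¹)^2‖ = (a^2 + y^2)⁻¹ := by
  have habs : ‖(a:ℂ) + y * Complex.I‖ ^ 2 = a^2 + y^2 := by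
    rw [Complex.sq_norm, Complex.normSq_apply]; simp; ring
  rw [norm_pow, norm_inv, inv_pow, habs]

lemma int_res_sq {a : ℝ} (ha : 0 < a) (c : ℝ) (hc : c ≠ 0) :
    Integrable (fun s : ℝ => (((a : ℂ) + (c * s) * Complex.I)⁻¹)^2) := by
  apply Integrable.mono' ((integrable_inv_one_add_sq).const_mul (max (1/a^2) (1/c^2)))
  · apply Continuous.aestronglyMeasurable
    apply Continuous.pow
    apply Continuous.inv₀
    · exact continuous_const.add ((continuous_const.mul Complex.continuous_ofReal).mul continuous_const)
    · intro s
      intro h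
      have := congrArg Complex.re h
      simp at this
      exact absurd this (ne_of_gt ha)
  · filter_upwards with s
    have hcast : ((c:ℂ) * s) = (((c * s : ℝ)) : ℂ) := by push_cast; ring
    rw [hcast, norm_res_sq ha, ← one_div, ← div_eq_mul_inv,
      div_le_div_iff₀ (by positivity) (by positivity)]
    set K := max (1/a^2) (1/c^2) with hK
    have h1 : 1 ≤ K * a^2 := by
      have h : 1/a^2 ≤ K := le_max_left _ _
      calc (1:ℝ) = (1/a^2) * a^2 := by field_simp
      _ ≤ K * a^2 := mul_le_mul_of_nonneg_right h (by positivity)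
    have h2 : s^2 ≤ K * (c*s)^2 := by
      have h : 1/c^2 ≤ K := le_max_right _ _
      calc s^2 = (1/c^2) * (c*s)^2 := by field_simp
      _ ≤ K * (c*s)^2 := mul_le_mul_of_nonneg_right h (by positivity)
    nlinarith [h1, h2]


lemma fourierInt_fmax_int {a : ℝ} (ha : 0 < a) : Integrable (𝓕 (fmax a)) := by
  apply (int_res_sq ha (2*π) (by positivity)).congr
  filter_upwards with s
  rw [fourier_fmax ha s]
  push_cast
  ring_nf

lemma fourier_inv_fmax {a : ℝ} (ha : 0 < a) (τ : ℝ) :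
    ∫ s : ℝ, (((a : ℂ) + s * Complex.I)⁻¹)^2 * Complex.exp ((s : ℂ) * τ * Complex.I)
      = ((2 * π : ℝ) : ℂ) * fmax a τ := by
  have hinv := (fmax_int ha).fourierInv_fourier_eq (fourierInt_fmax_int ha)
    ((fmax_cont a).continuousAt (x := τ))
  rw [Real.fourierInv_eq'] at hinv
  set g : ℝ → ℂ := fun y => (((a : ℂ) + y * Complex.I)⁻¹)^2 * Complex.exp ((y : ℂ) * τ * Complex.I)
    with hg
  have hcomp : ∀ s : ℝ, Complex.exp (((2 * π * (inner ℝ s τ : ℝ) : ℝ) : ℂ) * Complex.I)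
      • 𝓕 (fmax a) s = g (2 * π * s) := by
    intro s
    rw [fourier_fmax ha s, smul_eq_mul, hg]
    have : (inner ℝ s τ : ℝ) = s * τ := inner_apply s τ
    rw [this]
    push_cast
    ring
  rw [MeasureTheory.integral_congr_ae (Filter.Eventually.of_forall hcomp)] at hinv
  rw [MeasureTheory.Measure.integral_comp_mul_left g (2*π)] at hinv
  rw [← hinv]
  rw [_root_.abs_of_nonneg (by positivity : (0:ℝ) ≤ (2*π)⁻¹), Complex.real_smul]
  push_cast
  rw [← mul_assoc, mul_inv_cancel₀ (by norm_num [Real.pi_ne_zero] : (2*(π:ℂ)) ≠ 0), one_mul]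

lemma ebeta {β : ℝ} (τ : ℝ) :
    Complex.exp ((β:ℂ) * τ) * fmax (1+β) τ = fmax 1 τ := by
  rw [fmax, fmax]
  rcases le_or_gt τ 0 with h | h
  · rw [max_eq_right h]; simp
  · rw [max_eq_left h.le, ← mul_assoc, mul_comm (Complex.exp _), mul_assoc, ← Complex.exp_add]
    congr 2
    push_cast
    ring

lemma norm_cexp_mul_ofReal (c : ℂ) (t : ℝ) : ‖Complex.exp (c * t)‖ = Real.exp (c.re * t) := by
  rw [Complex.norm_exp]
  congr 1
  simp [Complex.mul_re]

lemma int_exp_c {c : ℂ} (hc : c.re < 0) :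
    IntegrableOn (fun t : ℝ => Complex.exp (c * t)) (Ioi 0) := by
  have := laplace_one (z := -c) (by simpa using hc)
  apply this.congr
  filter_upwards with t
  congr 1
  ring

lemma int_exp_real {c : ℝ} (hc : c < 0) :
    IntegrableOn (fun t : ℝ => Real.exp (c * t)) (Ioi 0) := by
  have := exp_neg_integrableOn_Ioi 0 (by linarith : 0 < -c)
  apply this.congr
  filter_upwards with t
  congr 1
  ring

lemma int_texp_c {c : ℂ} (hc : c.re < 0) :
    IntegrableOn (fun t : ℝ => (t:ℂ) * Complex.exp (c * t)) (Ioi 0) := by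
  have := aux_int_cexp_t (z := -c) (by simpa using hc)
  apply this.congr
  filter_upwards with t
  congr 2
  ring

lemma int_inv_sq_real {a : ℝ} (ha : 0 < a) :
    Integrable (fun s : ℝ => (a^2 + s^2)⁻¹) := by
  have := (int_res_sq ha 1 one_ne_zero).norm
  apply this.congr
  filter_upwards with s
  have h1 : ((1:ℝ) * s : ℂ) = ((1 * s : ℝ) : ℂ) := by push_cast; ring
  rw [h1, norm_res_sq ha, one_mul]

lemma int_b_exp {b : ℝ → ℂ} (hb : IntegrableOn b (Ioi 0)) {c : ℂ} (hc : c.re ≤ 0) :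
    IntegrableOn (fun t => b t * Complex.exp (c * t)) (Ioi 0) := by
  apply Integrable.mono' hb.norm
  · exact hb.aestronglyMeasurable.mul
      ((Complex.continuous_exp.comp (continuous_const.mul Complex.continuous_ofReal)).aestronglyMeasurable.restrict)
  · filter_upwards [ae_restrict_mem measurableSet_Ioi] with t ht
    rw [norm_mul, norm_cexp_mul_ofReal]
    have : Real.exp (c.re * t) ≤ 1 := by
      rw [Real.exp_le_one_iff]
      exact mul_nonpos_of_nonpos_of_nonneg hc (le_of_lt ht)
    calc ‖b t‖ * Real.exp (c.re * t) ≤ ‖b t‖ * 1 :=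
      mul_le_mul_of_nonneg_left this (norm_nonneg _)
    _ = ‖b t‖ := mul_one _

section SG
variable {X : Type*} [NormedAddCommGroup X] [NormedSpace ℂ X]
variable {T : ℝ → X →L[ℂ] X} {C : ℝ}

lemma sg_maps {u : ℝ} (hu : 0 ≤ u) : MapsTo (fun t : ℝ => t + u) (Ici 0) (Ici 0) := by
  intro t ht
  simp only [mem_Ici] at *
  linarith

lemma sg_contOn (hTcont : ∀ x : X, ContinuousOn (fun t => T t x) (Set.Ici 0)) (x : X)
    {u : ℝ} (hu : 0 ≤ u) :
    ContinuousOn (fun t : ℝ => T (t + u) x) (Ici 0) :=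
  (hTcont x).comp (Continuous.continuousOn (continuous_id.add continuous_const)) (sg_maps hu)

lemma sg_meas (hTcont : ∀ x : X, ContinuousOn (fun t => T t x) (Set.Ici 0)) (x : X)
    {u : ℝ} (hu : 0 ≤ u) :
    AEStronglyMeasurable (fun t => T (t + u) x) (volume.restrict (Ioi (0:ℝ))) :=
  ContinuousOn.aestronglyMeasurable
    ((sg_contOn hTcont x hu).mono (fun t (ht : t ∈ Ioi 0) => mem_Ici.2 (le_of_lt (mem_Ioi.1 ht)))) measurableSet_Ioi

lemma sg_bound (hC : ∀ t : ℝ, 0 ≤ t → ‖T t‖ ≤ C) (x : X) {t : ℝ} (ht : 0 ≤ t) :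
    ‖T t x‖ ≤ C * ‖x‖ :=
  le_trans ((T t).le_opNorm x) (mul_le_mul_of_nonneg_right (hC t ht) (norm_nonneg x))

lemma sg_int (hTcont : ∀ x : X, ContinuousOn (fun t => T t x) (Set.Ici 0))
    (hC : ∀ t : ℝ, 0 ≤ t → ‖T t‖ ≤ C) (x : X) {φ : ℝ → ℂ}
    (hφ : IntegrableOn φ (Ioi 0)) {u : ℝ} (hu : 0 ≤ u) :
    IntegrableOn (fun t => φ t • T (t + u) x) (Ioi 0) := by
  apply Integrable.mono' (hφ.norm.mul_const (C * ‖x‖))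
  · exact hφ.aestronglyMeasurable.smul (sg_meas hTcont x hu)
  · filter_upwards [ae_restrict_mem measurableSet_Ioi] with t ht
    rw [norm_smul]
    exact mul_le_mul_of_nonneg_left (sg_bound hC x (by simp only [mem_Ioi] at ht; linarith))
      (norm_nonneg _)

lemma sg_int0 (hTcont : ∀ x : X, ContinuousOn (fun t => T t x) (Set.Ici 0))
    (hC : ∀ t : ℝ, 0 ≤ t → ‖T t‖ ≤ C) (x : X) {φ : ℝ → ℂ}
    (hφ : IntegrableOn φ (Ioi 0)) :
    IntegrableOn (fun t => φ t • T t x) (Ioi 0) := by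
  have := sg_int hTcont hC x hφ (le_refl 0)
  simpa using this

end SG

lemma shift_Ioi {X : Type*} [NormedAddCommGroup X] [NormedSpace ℝ X] (f : ℝ → X) (u : ℝ) :
    ∫ t in Ioi u, f t = ∫ τ in Ioi (0:ℝ), f (τ + u) := by
  rw [← integral_indicator measurableSet_Ioi, ← integral_indicator measurableSet_Ioi,
    ← integral_add_right_eq_self (fun t => Set.indicator (Ioi u) f t) u]
  congr 1
  funext τ
  rcases lt_or_ge 0 τ with h | h
  · rw [Set.indicator_of_mem (by simpa using h), Set.indicator_of_mem (mem_Ioi.2 (by linarith))]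
  · rw [Set.indicator_of_notMem (by simpa using h),
      Set.indicator_of_notMem (by simp only [mem_Ioi]; intro hc; linarith)]

lemma ae_snd_prod {s : Set ℝ} (hs : MeasurableSet s) :
    ∀ᵐ p : ℝ × ℝ ∂((volume : Measure ℝ).prod (volume.restrict s)), p.2 ∈ s := by
  rw [← Measure.restrict_univ (μ := (volume : Measure ℝ)), Measure.prod_restrict]
  filter_upwards [ae_restrict_mem (MeasurableSet.univ.prod hs)] with p hp
  exact hp.2

lemma ae_both_prod {s t : Set ℝ} (hs : MeasurableSet s) (ht : MeasurableSet t) :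
    ∀ᵐ p : ℝ × ℝ ∂((volume.restrict s).prod (volume.restrict t)), p.1 ∈ s ∧ p.2 ∈ t := by
  rw [Measure.prod_restrict]
  filter_upwards [ae_restrict_mem (hs.prod ht)] with p hp
  exact hp

section Main
variable {X : Type*} [NormedAddCommGroup X] [NormedSpace ℂ X] [CompleteSpace X]

lemma rhs_eq (T : ℝ → X →L[ℂ] X) (C : ℝ)
    (hTsg : ∀ s t : ℝ, 0 ≤ s → 0 ≤ t → T (s + t) = (T s).comp (T t))
    (hTcont : ∀ x : X, ContinuousOn (fun t => T t x) (Set.Ici 0))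
    (hC : ∀ t : ℝ, 0 ≤ t → ‖T t‖ ≤ C)
    (b : ℝ → ℂ) (hb : IntegrableOn b (Ioi 0))
    (ε : ℝ) (hε : 0 < ε) (x : X) :
    -(∫ r in Ioi (0 : ℝ), Complex.exp (((-1 - ε : ℝ) : ℂ) * r) •
          T r (-(∫ r' in Ioi (0 : ℝ), Complex.exp (((-1 - ε : ℝ) : ℂ) * r') •
            T r' (∫ t in Ioi (0 : ℝ),
              (b t * Complex.exp (-((ε : ℂ) * t))) • T t x))))
      = ∫ u in Ioi (0:ℝ), (b u * Complex.exp (-((ε : ℂ) * u))) •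
          (∫ τ in Ioi (0:ℝ), ((τ:ℂ) * Complex.exp (((-1 - ε : ℝ) : ℂ) * τ)) • T (τ + u) x) := by
  set c : ℂ := ((-1 - ε : ℝ) : ℂ) with hc_def
  have hcre : c.re = -1 - ε := by rw [hc_def]; simp
  have hcre' : c.re < 0 := by rw [hcre]; linarith
  have hC0 : 0 ≤ C := le_trans (norm_nonneg (T 0)) (hC 0 le_rfl)
  set w : X := ∫ t in Ioi (0:ℝ), (b t * Complex.exp (-((ε:ℂ) * t))) • T t x with hw_def
  set h : ℝ → X := fun ρ => Complex.exp (c * ρ) • T ρ w with hh_def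
  have hbe : IntegrableOn (fun t : ℝ => b t * Complex.exp (-((ε:ℂ) * t))) (Ioi 0) := by
    apply (int_b_exp hb (c := -(ε:ℂ)) (by simp [hε.le])).congr
    filter_upwards with t
    rw [neg_mul]
  have hw_int : IntegrableOn (fun t => (b t * Complex.exp (-((ε:ℂ) * t))) • T t x) (Ioi 0) :=
    sg_int0 hTcont hC x hbe
  have hh_int : IntegrableOn h (Ioi 0) := sg_int0 hTcont hC w (int_exp_c hcre')
  have hTρw : ∀ ρ : ℝ, 0 ≤ ρ →
      T ρ w = ∫ t in Ioi (0:ℝ), (b t * Complex.exp (-((ε:ℂ)*t))) • T (t + ρ) x := by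
    intro ρ hρ
    rw [hw_def, ← ContinuousLinearMap.integral_comp_comm _ hw_int]
    apply setIntegral_congr_fun measurableSet_Ioi
    intro t ht
    simp only
    rw [ContinuousLinearMap.map_smul]
    congr 1
    have := hTsg ρ t hρ (le_of_lt ht)
    calc (T ρ) ((T t) x) = ((T ρ).comp (T t)) x := rfl
    _ = T (ρ + t) x := by rw [← this]
    _ = T (t + ρ) x := by rw [add_comm]
  have step1 : -(∫ r in Ioi (0 : ℝ), Complex.exp (c * r) •
          T r (-(∫ r' in Ioi (0 : ℝ), Complex.exp (c * r') • T r' w)))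
      = ∫ r in Ioi (0:ℝ), Complex.exp (c*r) •
          T r (∫ r' in Ioi (0:ℝ), Complex.exp (c*r') • T r' w) := by
    rw [← integral_neg]
    congr 1
    funext r
    rw [map_neg, smul_neg, neg_neg]
  have step2 : ∀ r ∈ Ioi (0:ℝ), Complex.exp (c*r) •
        T r (∫ r' in Ioi (0:ℝ), Complex.exp (c*r') • T r' w)
      = ∫ ρ in Ioi (0:ℝ), Set.indicator (Ioi r) h ρ := by
    intro r hr
    rw [← ContinuousLinearMap.integral_comp_comm _ hh_int, ← integral_smul,
      setIntegral_indicator measurableSet_Ioi,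
      inter_eq_self_of_subset_right (Ioi_subset_Ioi (le_of_lt hr)), shift_Ioi h r]
    apply setIntegral_congr_fun measurableSet_Ioi
    intro r' hr'
    rw [hh_def]
    simp only
    rw [ContinuousLinearMap.map_smul, smul_smul, ← Complex.exp_add]
    have h1 : c * r + c * r' = c * ((r' + r : ℝ) : ℂ) := by push_cast; ring
    have h2 : (T r) ((T r') w) = T (r' + r) w := by
      calc (T r) ((T r') w) = ((T r).comp (T r')) w := rfl
      _ = T (r + r') w := by rw [← hTsg r r' (le_of_lt hr) (le_of_lt hr')]
      _ = T (r' + r) w := by rw [add_comm]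
    rw [h1, h2]
  have hmem_ind : ∀ p : ℝ × ℝ, Set.indicator (Ioi p.1) h p.2
      = Set.indicator {q : ℝ × ℝ | q.1 < q.2} (fun q => h q.2) p := by
    intro p
    by_cases h' : p.1 < p.2
    · rw [Set.indicator_of_mem (mem_Ioi.2 h'), Set.indicator_of_mem (by exact h')]
    · rw [Set.indicator_of_notMem (by simpa using h'), Set.indicator_of_notMem (by exact h')]
  have hFub3 : Integrable (fun p : ℝ × ℝ => Set.indicator (Ioi p.1) h p.2)
      ((volume.restrict (Ioi (0:ℝ))).prod (volume.restrict (Ioi (0:ℝ)))) := by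
    apply Integrable.mono' (g := fun p : ℝ × ℝ =>
      Real.exp (-((1+ε)/2) * p.1) * (Real.exp (-((1+ε)/2) * p.2) * (C * ‖w‖)))
    · exact (int_exp_real (by linarith)).mul_prod ((int_exp_real (by linarith)).mul_const _)
    · apply AEStronglyMeasurable.congr
        ((hh_int.aestronglyMeasurable.comp_snd).indicator
          (measurableSet_lt measurable_fst measurable_snd))
      filter_upwards with p
      exact (hmem_ind p).symm
    · filter_upwards [ae_both_prod measurableSet_Ioi measurableSet_Ioi] with p hp
      rcases lt_or_ge p.1 p.2 with hlt | hle
      · rw [Set.indicator_of_mem (mem_Ioi.2 hlt), hh_def]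
        simp only
        rw [norm_smul, norm_cexp_mul_ofReal, hcre]
        have h1 : ‖T p.2 w‖ ≤ C * ‖w‖ := sg_bound hC w (le_of_lt hp.2)
        have h2 : Real.exp ((-1-ε) * p.2)
            = Real.exp (-((1+ε)/2) * p.2) * Real.exp (-((1+ε)/2) * p.2) := by
          rw [← Real.exp_add]; ring_nf
        have h3 : Real.exp (-((1+ε)/2) * p.2) ≤ Real.exp (-((1+ε)/2) * p.1) := by
          apply Real.exp_le_exp.2
          nlinarith [hlt]
        calc Real.exp ((-1-ε) * p.2) * ‖T p.2 w‖
            ≤ Real.exp ((-1-ε) * p.2) * (C * ‖w‖) :=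
              mul_le_mul_of_nonneg_left h1 (Real.exp_nonneg _)
        _ = Real.exp (-((1+ε)/2) * p.2) * (Real.exp (-((1+ε)/2) * p.2) * (C * ‖w‖)) := by
              rw [h2]; ring
        _ ≤ Real.exp (-((1+ε)/2) * p.1) * (Real.exp (-((1+ε)/2) * p.2) * (C * ‖w‖)) := by
              apply mul_le_mul_of_nonneg_right h3
              exact mul_nonneg (Real.exp_nonneg _) (mul_nonneg hC0 (norm_nonneg _))
      · rw [Set.indicator_of_notMem (by simpa using hle), norm_zero]
        exact mul_nonneg (Real.exp_nonneg _)
          (mul_nonneg (Real.exp_nonneg _) (mul_nonneg hC0 (norm_nonneg _)))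
  have step3 : (∫ r in Ioi (0:ℝ), ∫ ρ in Ioi (0:ℝ), Set.indicator (Ioi r) h ρ)
      = ∫ ρ in Ioi (0:ℝ), ∫ r in Ioi (0:ℝ), Set.indicator (Ioi r) h ρ :=
    integral_integral_swap hFub3
  have step4 : ∀ ρ ∈ Ioi (0:ℝ),
      (∫ r in Ioi (0:ℝ), Set.indicator (Ioi r) h ρ) = ρ • h ρ := by
    intro ρ hρ
    have hpt : ∀ r ∈ Ioi (0:ℝ), Set.indicator (Ioi r) h ρ
        = Set.indicator (Iio ρ) (fun _ => h ρ) r := by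
      intro r _
      by_cases h' : r < ρ
      · rw [Set.indicator_of_mem (mem_Ioi.2 h'), Set.indicator_of_mem (mem_Iio.2 h')]
      · rw [Set.indicator_of_notMem (by simpa using h'),
          Set.indicator_of_notMem (by simpa using h')]
    rw [setIntegral_congr_fun measurableSet_Ioi hpt,
      setIntegral_indicator measurableSet_Iio, Ioi_inter_Iio, setIntegral_const,
      Real.volume_real_Ioo_of_le (le_of_lt hρ), sub_zero]
  have hcontTsum : ContinuousOn (fun p : ℝ × ℝ => T (p.2 + p.1) x) ((Ioi 0) ×ˢ (Ioi (0:ℝ))) := by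
    apply (hTcont x).comp (Continuous.continuousOn (continuous_snd.add continuous_fst))
    intro p hp
    have h1 := hp.1
    have h2 := hp.2
    simp only [mem_Ioi] at h1 h2
    simp only [mem_Ici, Pi.add_apply]
    linarith
  have hFub4 : Integrable (fun p : ℝ × ℝ =>
      ((b p.2 * Complex.exp (-((ε:ℂ) * p.2))) * ((p.1:ℂ) * Complex.exp (c * p.1)))
        • T (p.2 + p.1) x)
      ((volume.restrict (Ioi (0:ℝ))).prod (volume.restrict (Ioi (0:ℝ)))) := by
    apply Integrable.mono' (g := fun p : ℝ × ℝ =>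
      (p.1 * Real.exp (-(1+ε) * p.1)) * (‖b p.2‖ * (C * ‖x‖)))
    · exact (aux_int_texp (by linarith)).mul_prod (hb.norm.mul_const _)
    · apply AEStronglyMeasurable.smul
      · apply AEStronglyMeasurable.mul
        · exact ((hb.aestronglyMeasurable.mul
            ((Complex.continuous_exp.comp
              ((continuous_const.mul Complex.continuous_ofReal).neg)).aestronglyMeasurable.restrict)).comp_snd)
        · exact ((Complex.continuous_ofReal.mul (Complex.continuous_exp.comp
            (continuous_const.mul Complex.continuous_ofReal))).comp continuous_fst).aestronglyMeasurable
      · rw [Measure.prod_restrict]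
        exact hcontTsum.aestronglyMeasurable (measurableSet_Ioi.prod measurableSet_Ioi)
    · filter_upwards [ae_both_prod measurableSet_Ioi measurableSet_Ioi] with p hp
      obtain ⟨hp1, hp2⟩ := hp
      simp only [mem_Ioi] at hp1 hp2
      rw [norm_smul, norm_mul, norm_mul, norm_mul,
        show -((ε:ℂ) * (p.2:ℂ)) = (-(ε:ℂ)) * (p.2:ℂ) by ring,
        norm_cexp_mul_ofReal, norm_cexp_mul_ofReal, hcre,
        show ((-(ε:ℂ))).re = -ε by simp,
        show ‖((p.1:ℝ):ℂ)‖ = p.1 by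
          rw [Complex.norm_real, Real.norm_eq_abs, _root_.abs_of_nonneg (le_of_lt hp1)],
        show (-1-ε : ℝ) = -(1+ε) by ring]
      have hT : ‖T (p.2+p.1) x‖ ≤ C * ‖x‖ := sg_bound hC x (by linarith)
      have he2 : Real.exp (-ε * p.2) ≤ 1 := by
        rw [Real.exp_le_one_iff]
        nlinarith
      have key : Real.exp (-ε * p.2) * ‖T (p.2+p.1) x‖ ≤ C * ‖x‖ := by
        calc Real.exp (-ε * p.2) * ‖T (p.2+p.1) x‖ ≤ 1 * (C * ‖x‖) :=
          mul_le_mul he2 hT (norm_nonneg _) zero_le_one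
        _ = C * ‖x‖ := one_mul _
      calc ‖b p.2‖ * Real.exp (-ε * p.2) * (p.1 * Real.exp (-(1+ε) * p.1)) * ‖T (p.2+p.1) x‖
          = (p.1 * Real.exp (-(1+ε) * p.1)) * ‖b p.2‖ * (Real.exp (-ε * p.2) * ‖T (p.2+p.1) x‖) := by
            ring
      _ ≤ (p.1 * Real.exp (-(1+ε) * p.1)) * ‖b p.2‖ * (C * ‖x‖) := by
            apply mul_le_mul_of_nonneg_left key
            exact mul_nonneg (mul_nonneg (le_of_lt hp1) (Real.exp_nonneg _)) (norm_nonneg _)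
      _ = (p.1 * Real.exp (-(1+ε) * p.1)) * (‖b p.2‖ * (C * ‖x‖)) := by ring
  rw [step1, setIntegral_congr_fun measurableSet_Ioi step2, step3,
    setIntegral_congr_fun measurableSet_Ioi step4]
  have step5 : ∀ ρ ∈ Ioi (0:ℝ), ρ • h ρ
      = ∫ t in Ioi (0:ℝ), ((b t * Complex.exp (-((ε:ℂ)*t))) * ((ρ:ℂ) * Complex.exp (c*ρ)))
          • T (t + ρ) x := by
    intro ρ hρ
    rw [hh_def]
    simp only
    rw [← Complex.coe_smul, smul_smul, hTρw ρ (le_of_lt hρ), ← integral_smul]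
    apply setIntegral_congr_fun measurableSet_Ioi
    intro t ht
    simp only
    rw [smul_smul]
    congr 1
    ring
  rw [setIntegral_congr_fun measurableSet_Ioi step5, integral_integral_swap hFub4]
  apply setIntegral_congr_fun measurableSet_Ioi
  intro u hu
  simp only
  rw [← integral_smul]
  apply setIntegral_congr_fun measurableSet_Ioi
  intro τ hτ
  simp only
  rw [smul_smul, add_comm u τ]

lemma lhs_eq (T : ℝ → X →L[ℂ] X) (C : ℝ)
    (hTcont : ∀ x : X, ContinuousOn (fun t => T t x) (Set.Ici 0))
    (hC : ∀ t : ℝ, 0 ≤ t → ‖T t‖ ≤ C)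
    (b : ℝ → ℂ) (hb : IntegrableOn b (Ioi 0))
    (ε β : ℝ) (hε : 0 < ε) (hβ : 0 < β) (hβε : β < ε) (x : X) :
    ((-(2 * Real.pi)⁻¹ : ℝ) : ℂ) •
        (∫ s : ℝ,
          (((1 + ((β : ℂ) + Complex.I * s))⁻¹ ^ 2) *
            (∫ t in Ioi (0 : ℝ), b t * Complex.exp (-(t * ((β : ℂ) + Complex.I * s))))) •
          (-(∫ t in Ioi (0 : ℝ),
              Complex.exp ((((β : ℂ) + Complex.I * s) - (ε : ℂ)) * t) • T t x)))
      = ∫ u in Ioi (0:ℝ), (b u * Complex.exp (-((ε : ℂ) * u))) •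
          (∫ τ in Ioi (0:ℝ), ((τ:ℂ) * Complex.exp (((-1 - ε : ℝ) : ℂ) * τ)) • T (τ + u) x) := by
  have hC0 : 0 ≤ C := le_trans (norm_nonneg (T 0)) (hC 0 le_rfl)
  have ha : 0 < 1 + β := by linarith
  have hβε' : β - ε < 0 := by linarith
  have h1z : ∀ s : ℝ, (1 : ℂ) + ((β:ℂ) + Complex.I * s) = ((1+β : ℝ):ℂ) + (s:ℂ) * Complex.I := by
    intro s; push_cast; ring
  have hzsub : ∀ s : ℝ, (((β:ℂ) + Complex.I * s) - (ε:ℂ)).re = β - ε := by intro s; simp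
  have h1zn : ∀ s : ℝ, ‖((1 : ℂ) + ((β:ℂ) + Complex.I * s))⁻¹ ^ 2‖ = ((1+β)^2 + s^2)⁻¹ := by
    intro s; rw [h1z, norm_res_sq ha]
  have hVint : ∀ s : ℝ, IntegrableOn
      (fun t : ℝ => Complex.exp ((((β:ℂ) + Complex.I * s) - (ε:ℂ)) * t) • T t x) (Ioi 0) := by
    intro s
    exact sg_int0 hTcont hC x (int_exp_c (by rw [hzsub]; linarith))
  have hVbnd : ∀ s : ℝ, ∀ᵐ (t : ℝ) ∂(volume.restrict (Ioi (0:ℝ))),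
      ‖Complex.exp ((((β:ℂ) + Complex.I * s) - (ε:ℂ)) * t) • T t x‖
        ≤ Real.exp ((β-ε)*t) * (C*‖x‖) := by
    intro s
    filter_upwards [ae_restrict_mem measurableSet_Ioi] with t ht
    rw [norm_smul, norm_cexp_mul_ofReal, hzsub]
    exact mul_le_mul_of_nonneg_left (sg_bound hC x (le_of_lt ht)) (Real.exp_nonneg _)
  have hVcont : Continuous (fun s : ℝ =>
      ∫ t in Ioi (0:ℝ), Complex.exp ((((β:ℂ) + Complex.I * s) - (ε:ℂ)) * t) • T t x) := by
    rw [continuous_iff_continuousAt]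
    intro s₀
    apply continuousAt_of_dominated (bound := fun t => Real.exp ((β-ε)*t) * (C*‖x‖))
    · filter_upwards with s
      exact (hVint s).aestronglyMeasurable
    · filter_upwards with s
      exact hVbnd s
    · exact (int_exp_real hβε').mul_const _
    · filter_upwards with t
      apply Continuous.continuousAt
      exact (Complex.continuous_exp.comp
        (((continuous_const.add (continuous_const.mul Complex.continuous_ofReal)).sub
          continuous_const).mul continuous_const)).smul continuous_const
  have hVnorm : ∀ s : ℝ,
      ‖∫ t in Ioi (0:ℝ), Complex.exp ((((β:ℂ) + Complex.I * s) - (ε:ℂ)) * t) • T t x‖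
        ≤ ∫ t in Ioi (0:ℝ), Real.exp ((β-ε)*t) * (C*‖x‖) := by
    intro s
    exact norm_integral_le_of_norm_le ((int_exp_real hβε').mul_const _) (hVbnd s)
  have hKV0 : 0 ≤ ∫ t in Ioi (0:ℝ), Real.exp ((β-ε)*t) * (C*‖x‖) :=
    integral_nonneg (fun t => mul_nonneg (Real.exp_nonneg _) (mul_nonneg hC0 (norm_nonneg _)))
  have hsmeas0 : AEStronglyMeasurable (fun t => T t x) (volume.restrict (Ioi (0:ℝ))) := by
    have := sg_meas hTcont x (le_refl 0)
    simpa using this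
  -- step 1 : flip signs
  have step1 : ((-(2 * Real.pi)⁻¹ : ℝ) : ℂ) •
        (∫ s : ℝ,
          (((1 + ((β : ℂ) + Complex.I * s))⁻¹ ^ 2) *
            (∫ t in Ioi (0 : ℝ), b t * Complex.exp (-(t * ((β : ℂ) + Complex.I * s))))) •
          (-(∫ t in Ioi (0 : ℝ),
              Complex.exp ((((β : ℂ) + Complex.I * s) - (ε : ℂ)) * t) • T t x)))
      = (((2 * Real.pi)⁻¹ : ℝ) : ℂ) •
        (∫ s : ℝ,
          (((1 + ((β : ℂ) + Complex.I * s))⁻¹ ^ 2) *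
            (∫ t in Ioi (0 : ℝ), b t * Complex.exp (-(t * ((β : ℂ) + Complex.I * s))))) •
          (∫ t in Ioi (0 : ℝ),
              Complex.exp ((((β : ℂ) + Complex.I * s) - (ε : ℂ)) * t) • T t x)) := by
    have hneg : (∫ s : ℝ,
        (((1 + ((β : ℂ) + Complex.I * s))⁻¹ ^ 2) *
            (∫ t in Ioi (0 : ℝ), b t * Complex.exp (-(t * ((β : ℂ) + Complex.I * s))))) •
          (-(∫ t in Ioi (0 : ℝ),
              Complex.exp ((((β : ℂ) + Complex.I * s) - (ε : ℂ)) * t) • T t x)))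
        = -∫ s : ℝ,
        (((1 + ((β : ℂ) + Complex.I * s))⁻¹ ^ 2) *
            (∫ t in Ioi (0 : ℝ), b t * Complex.exp (-(t * ((β : ℂ) + Complex.I * s))))) •
          (∫ t in Ioi (0 : ℝ),
              Complex.exp ((((β : ℂ) + Complex.I * s) - (ε : ℂ)) * t) • T t x) := by
      rw [← integral_neg]
      congr 1
      funext s
      rw [smul_neg]
    rw [show ((-(2 * Real.pi)⁻¹ : ℝ) : ℂ) = -(((2 * Real.pi)⁻¹ : ℝ) : ℂ) by push_cast; ring,
      hneg, neg_smul_neg]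
  rw [step1]
  -- step 2 : expand the product of the Laplace transform into a double integral
  have step2 : ∀ s : ℝ,
      (((1 + ((β : ℂ) + Complex.I * s))⁻¹ ^ 2) *
        (∫ t in Ioi (0 : ℝ), b t * Complex.exp (-(t * ((β : ℂ) + Complex.I * s))))) •
        (∫ t in Ioi (0 : ℝ), Complex.exp ((((β : ℂ) + Complex.I * s) - (ε : ℂ)) * t) • T t x)
      = ∫ u in Ioi (0:ℝ),
          (((1 + ((β : ℂ) + Complex.I * s))⁻¹ ^ 2) *
            (b u * Complex.exp (-(u * ((β : ℂ) + Complex.I * s))))) •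
          (∫ t in Ioi (0 : ℝ), Complex.exp ((((β : ℂ) + Complex.I * s) - (ε : ℂ)) * t) • T t x) := by
    intro s
    rw [integral_smul_const, integral_const_mul]
  rw [integral_congr_ae (Filter.Eventually.of_forall step2)]
  -- Fubini 1
  have hFub1 : Integrable (fun p : ℝ × ℝ =>
      (((1 + ((β : ℂ) + Complex.I * p.1))⁻¹ ^ 2) *
        (b p.2 * Complex.exp (-(p.2 * ((β : ℂ) + Complex.I * p.1))))) •
        (∫ t in Ioi (0 : ℝ), Complex.exp ((((β : ℂ) + Complex.I * p.1) - (ε : ℂ)) * t) • T t x))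
      ((volume : Measure ℝ).prod (volume.restrict (Ioi (0:ℝ)))) := by
    apply Integrable.mono' (g := fun p : ℝ × ℝ =>
      (((1+β)^2 + p.1^2)⁻¹ * (∫ t in Ioi (0:ℝ), Real.exp ((β-ε)*t) * (C*‖x‖))) * ‖b p.2‖)
    · exact ((int_inv_sq_real ha).mul_const _).mul_prod hb.norm
    · apply AEStronglyMeasurable.smul
      · apply AEStronglyMeasurable.mul
        · apply Continuous.aestronglyMeasurable
          apply Continuous.pow
          apply Continuous.inv₀
          · exact (continuous_const.add (continuous_const.add
              (continuous_const.mul (Complex.continuous_ofReal.comp continuous_fst))))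
          · intro p hp
            have := congrArg Complex.re hp
            simp at this
            linarith
        · apply AEStronglyMeasurable.mul
          · exact hb.aestronglyMeasurable.comp_snd
          · apply Continuous.aestronglyMeasurable
            apply Complex.continuous_exp.comp
            apply Continuous.neg
            exact (Complex.continuous_ofReal.comp continuous_snd).mul
              (continuous_const.add (continuous_const.mul
                (Complex.continuous_ofReal.comp continuous_fst)))
      · exact (hVcont.comp continuous_fst).aestronglyMeasurable
    · filter_upwards [ae_snd_prod measurableSet_Ioi] with p hp
      rw [norm_smul, norm_mul, norm_mul,
        show -((p.2:ℂ) * ((β:ℂ) + Complex.I * p.1))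
            = (-((β:ℂ) + Complex.I * p.1)) * (p.2:ℂ) by ring,
        norm_cexp_mul_ofReal, h1zn,
        show (-((β:ℂ) + Complex.I * p.1)).re = -β by simp]
      have he : Real.exp (-β * p.2) ≤ 1 := by
        rw [Real.exp_le_one_iff]
        have := le_of_lt (mem_Ioi.1 hp)
        nlinarith
      calc ((1+β)^2 + p.1^2)⁻¹ * (‖b p.2‖ * Real.exp (-β * p.2)) *
            ‖∫ t in Ioi (0 : ℝ),
              Complex.exp ((((β : ℂ) + Complex.I * p.1) - (ε : ℂ)) * t) • T t x‖
          ≤ ((1+β)^2 + p.1^2)⁻¹ * (‖b p.2‖ * 1) *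
              (∫ t in Ioi (0:ℝ), Real.exp ((β-ε)*t) * (C*‖x‖)) := by
            apply mul_le_mul
            · apply mul_le_mul_of_nonneg_left _ (by positivity)
              exact mul_le_mul_of_nonneg_left he (norm_nonneg _)
            · exact hVnorm p.1
            · exact norm_nonneg _
            · have : (0:ℝ) ≤ ((1+β)^2 + p.1^2)⁻¹ := by positivity
              exact mul_nonneg this (mul_nonneg (norm_nonneg _) zero_le_one)
      _ = (((1+β)^2 + p.1^2)⁻¹ * (∫ t in Ioi (0:ℝ), Real.exp ((β-ε)*t) * (C*‖x‖))) * ‖b p.2‖ := by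
            ring
  rw [integral_integral_swap hFub1]
  -- step 4 : inner Fourier computation for fixed u
  have step4 : ∀ u ∈ Ioi (0:ℝ),
      (∫ s : ℝ,
        (((1 + ((β : ℂ) + Complex.I * s))⁻¹ ^ 2) *
          (b u * Complex.exp (-(u * ((β : ℂ) + Complex.I * s))))) •
        (∫ t in Ioi (0 : ℝ), Complex.exp ((((β : ℂ) + Complex.I * s) - (ε : ℂ)) * t) • T t x))
      = ∫ t in Ioi (0:ℝ),
          (((2*Real.pi : ℝ):ℂ) * (b u * Complex.exp (-((ε:ℂ)*t)) * fmax 1 (t-u))) • T t x := by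
    intro u hu
    have hu' : 0 < u := mem_Ioi.1 hu
    have h4a : ∀ s : ℝ,
        (((1 + ((β : ℂ) + Complex.I * s))⁻¹ ^ 2) *
          (b u * Complex.exp (-(u * ((β : ℂ) + Complex.I * s))))) •
        (∫ t in Ioi (0 : ℝ), Complex.exp ((((β : ℂ) + Complex.I * s) - (ε : ℂ)) * t) • T t x)
        = ∫ t in Ioi (0:ℝ),
            ((((1 + ((β : ℂ) + Complex.I * s))⁻¹ ^ 2) *
              (b u * Complex.exp (-(u * ((β : ℂ) + Complex.I * s)))) *
              Complex.exp ((((β : ℂ) + Complex.I * s) - (ε : ℂ)) * t))) • T t x := by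
      intro s
      rw [← integral_smul]
      apply setIntegral_congr_fun measurableSet_Ioi
      intro t ht
      simp only
      rw [smul_smul]
    rw [integral_congr_ae (Filter.Eventually.of_forall h4a)]
    have hFub2 : Integrable (fun p : ℝ × ℝ =>
        ((((1 + ((β : ℂ) + Complex.I * p.1))⁻¹ ^ 2) *
          (b u * Complex.exp (-(u * ((β : ℂ) + Complex.I * p.1)))) *
          Complex.exp ((((β : ℂ) + Complex.I * p.1) - (ε : ℂ)) * p.2))) • T p.2 x)
        ((volume : Measure ℝ).prod (volume.restrict (Ioi (0:ℝ)))) := by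
      apply Integrable.mono' (g := fun p : ℝ × ℝ =>
        (((1+β)^2 + p.1^2)⁻¹ * ‖b u‖) * (Real.exp ((β-ε)*p.2) * (C*‖x‖)))
      · exact ((int_inv_sq_real ha).mul_const _).mul_prod ((int_exp_real hβε').mul_const _)
      · apply AEStronglyMeasurable.smul
        · apply Continuous.aestronglyMeasurable
          apply Continuous.mul
          apply Continuous.mul
          · apply Continuous.pow
            apply Continuous.inv₀
            · exact (continuous_const.add (continuous_const.add
                (continuous_const.mul (Complex.continuous_ofReal.comp continuous_fst))))
            · intro p hp
              have := congrArg Complex.re hp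
              simp at this
              linarith
          · exact continuous_const.mul (Complex.continuous_exp.comp
              ((continuous_const.mul (continuous_const.add
                (continuous_const.mul (Complex.continuous_ofReal.comp continuous_fst)))).neg))
          · exact Complex.continuous_exp.comp
              (((continuous_const.add (continuous_const.mul
                (Complex.continuous_ofReal.comp continuous_fst))).sub continuous_const).mul
                  (Complex.continuous_ofReal.comp continuous_snd))
        · exact hsmeas0.comp_snd
      · filter_upwards [ae_snd_prod measurableSet_Ioi] with p hp
        rw [norm_smul, norm_mul, norm_mul, norm_mul, h1zn,
          show -((u:ℂ) * ((β:ℂ) + Complex.I * p.1))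
              = (-((β:ℂ) + Complex.I * p.1)) * (u:ℂ) by ring,
          norm_cexp_mul_ofReal, norm_cexp_mul_ofReal,
          show (-((β:ℂ) + Complex.I * p.1)).re = -β by simp, hzsub]
        have he : Real.exp (-β * u) ≤ 1 := by
          rw [Real.exp_le_one_iff]
          nlinarith
        have hT : ‖T p.2 x‖ ≤ C * ‖x‖ := sg_bound hC x (le_of_lt (mem_Ioi.1 hp))
        calc ((1+β)^2 + p.1^2)⁻¹ * (‖b u‖ * Real.exp (-β * u)) * Real.exp ((β-ε)*p.2)
              * ‖T p.2 x‖
            = (((1+β)^2 + p.1^2)⁻¹ * ‖b u‖) * Real.exp ((β-ε)*p.2)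
              * (Real.exp (-β * u) * ‖T p.2 x‖) := by ring
        _ ≤ (((1+β)^2 + p.1^2)⁻¹ * ‖b u‖) * Real.exp ((β-ε)*p.2) * (1 * (C * ‖x‖)) := by
              apply mul_le_mul_of_nonneg_left
              · exact mul_le_mul he hT (norm_nonneg _) zero_le_one
              · positivity
        _ = (((1+β)^2 + p.1^2)⁻¹ * ‖b u‖) * (Real.exp ((β-ε)*p.2) * (C*‖x‖)) := by ring
    rw [integral_integral_swap hFub2]
    apply setIntegral_congr_fun measurableSet_Ioi
    intro t ht
    simp only
    rw [integral_smul_const]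
    congr 1
    have hks : ∀ s : ℝ,
        (((1 + ((β : ℂ) + Complex.I * s))⁻¹ ^ 2) *
          (b u * Complex.exp (-(u * ((β : ℂ) + Complex.I * s)))) *
          Complex.exp ((((β : ℂ) + Complex.I * s) - (ε : ℂ)) * t))
        = (b u * Complex.exp (-((ε:ℂ)*t)) * Complex.exp ((β:ℂ) * ((t - u : ℝ):ℂ)))
          * ((((1+β : ℝ):ℂ) + (s:ℂ) * Complex.I)⁻¹^2
              * Complex.exp ((s:ℂ) * ((t-u:ℝ):ℂ) * Complex.I)) := by
      intro s
      have hexp : Complex.exp (-((u:ℂ) * ((β:ℂ)+Complex.I*s)))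
          * Complex.exp ((((β:ℂ)+Complex.I*s) - (ε:ℂ)) * t)
          = Complex.exp (-((ε:ℂ)*t)) * Complex.exp ((β:ℂ) * ((t - u : ℝ):ℂ))
            * Complex.exp ((s:ℂ) * ((t-u:ℝ):ℂ) * Complex.I) := by
        rw [← Complex.exp_add, ← Complex.exp_add, ← Complex.exp_add]
        congr 1
        push_cast
        ring
      rw [h1z s]
      linear_combination ((((1+β : ℝ):ℂ) + (s:ℂ) * Complex.I)⁻¹^2 * b u) * hexp
    rw [integral_congr_ae (Filter.Eventually.of_forall hks), integral_const_mul,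
      fourier_inv_fmax ha (t-u)]
    linear_combination (((2*Real.pi : ℝ):ℂ) * (b u * Complex.exp (-((ε:ℂ)*t))))
      * ebeta (β := β) (t-u)
  rw [setIntegral_congr_fun measurableSet_Ioi step4]
  -- step 5 : substitution t = τ + u
  have step5 : ∀ u ∈ Ioi (0:ℝ),
      (∫ t in Ioi (0:ℝ),
        (((2*Real.pi : ℝ):ℂ) * (b u * Complex.exp (-((ε:ℂ)*t)) * fmax 1 (t-u))) • T t x)
      = ((2*Real.pi : ℝ):ℂ) • ((b u * Complex.exp (-((ε : ℂ) * u))) •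
          (∫ τ in Ioi (0:ℝ), ((τ:ℂ) * Complex.exp (((-1 - ε : ℝ) : ℂ) * τ)) • T (τ + u) x)) := by
    intro u hu
    have h5a : ∀ t ∈ Ioi (0:ℝ),
        (((2*Real.pi : ℝ):ℂ) * (b u * Complex.exp (-((ε:ℂ)*t)) * fmax 1 (t-u))) • T t x
        = ((2*Real.pi : ℝ):ℂ) • ((b u * Complex.exp (-((ε:ℂ)*t)) * fmax 1 (t-u)) • T t x) :=
      fun t _ => by rw [← smul_smul]
    rw [setIntegral_congr_fun measurableSet_Ioi h5a, integral_smul]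
    congr 1
    rw [setIntegral_eq_of_subset_of_ae_diff_eq_zero measurableSet_Ioi.nullMeasurableSet
      (Ioi_subset_Ioi (le_of_lt (mem_Ioi.1 hu)))
      (Filter.Eventually.of_forall (fun t htd => by
        have h1 : t ∉ Ioi u := htd.2
        simp only [mem_Ioi, not_lt] at h1
        have : max (t - u) 0 = 0 := max_eq_right (by linarith)
        simp [fmax, this]))]
    rw [shift_Ioi (fun t => (b u * Complex.exp (-((ε:ℂ)*t)) * fmax 1 (t-u)) • T t x) u,
      ← integral_smul]
    apply setIntegral_congr_fun measurableSet_Ioi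
    intro τ hτ
    simp only
    rw [smul_smul, show (τ + u - u : ℝ) = τ from by ring]
    congr 1
    simp only [fmax]
    rw [max_eq_left (le_of_lt (mem_Ioi.1 hτ))]
    have hexp2 : Complex.exp (-((ε:ℂ) * ((τ+u : ℝ):ℂ))) * Complex.exp (-(((1:ℝ):ℂ) * (τ:ℂ)))
        = Complex.exp (-((ε:ℂ)*(u:ℝ))) * Complex.exp (((-1-ε : ℝ):ℂ) * (τ:ℂ)) := by
      rw [← Complex.exp_add, ← Complex.exp_add]
      congr 1
      push_cast
      ring
    linear_combination (b u * (τ:ℂ)) * hexp2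
  rw [setIntegral_congr_fun measurableSet_Ioi step5, integral_smul, smul_smul,
    show (((2 * Real.pi)⁻¹ : ℝ) : ℂ) * ((2*Real.pi : ℝ):ℂ) = 1 by
      rw [← Complex.ofReal_mul, inv_mul_cancel₀ (by positivity), Complex.ofReal_one],
    one_smul]


end Main

/-- Lemma 4.3 (compatibility): let `-A` generate a bounded `C₀`-semigroup `(T_t)` on a
Banach space `X`, `b ∈ L¹(ℝ₊)` and `ε > 0`.  Then `L_b(A+ε)`, defined by the half-plane
holomorphic functional calculus, equals the Hille–Phillips operator
`Γ(A+ε, b) = ∫₀^∞ b(t) e^{-εt} T_t dt`.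

By definition of the half-plane calculus with regularizer `e(z) = (1+z)^{-2}`
(i.e. `e = e_{μ,2}` with `μ = -1`), and since `e(A+ε)` is injective, this equality is
equivalent to the identity `(e L_b)(A+ε) = e(A+ε) ∘ Γ(A+ε, b)` (valid for every choice
of abscissa `β ∈ (0, ε)`), where
`(e L_b)(A+ε) = (-1/2π) ∫_ℝ (e L_b)(β+is) R(β+is, A+ε) ds`,
`R(z, A+ε) = -∫₀^∞ e^{(z-ε)t} T_t dt` and `e(A+ε) = R(-1, A+ε)²`. -/
theorem stmt18 {X : Type*} [NormedAddCommGroup X] [NormedSpace ℂ X] [CompleteSpace X]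
    (T : ℝ → X →L[ℂ] X) (C : ℝ)
    (hT0 : T 0 = ContinuousLinearMap.id ℂ X)
    (hTsg : ∀ s t : ℝ, 0 ≤ s → 0 ≤ t → T (s + t) = (T s).comp (T t))
    (hTcont : ∀ x : X, ContinuousOn (fun t => T t x) (Set.Ici 0))
    (hC : ∀ t : ℝ, 0 ≤ t → ‖T t‖ ≤ C)
    (b : ℝ → ℂ) (hb : IntegrableOn b (Ioi 0))
    (ε β : ℝ) (hε : 0 < ε) (hβ : 0 < β) (hβε : β < ε) :
    ∀ x : X,
      ((-(2 * Real.pi)⁻¹ : ℝ) : ℂ) •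
        (∫ s : ℝ,
          (((1 + ((β : ℂ) + Complex.I * s))⁻¹ ^ 2) *
            (∫ t in Ioi (0 : ℝ), b t * Complex.exp (-(t * ((β : ℂ) + Complex.I * s))))) •
          (-(∫ t in Ioi (0 : ℝ),
              Complex.exp ((((β : ℂ) + Complex.I * s) - (ε : ℂ)) * t) • T t x)))
      = -(∫ r in Ioi (0 : ℝ), Complex.exp (((-1 - ε : ℝ) : ℂ) * r) •
          T r (-(∫ r' in Ioi (0 : ℝ), Complex.exp (((-1 - ε : ℝ) : ℂ) * r') •
            T r' (∫ t in Ioi (0 : ℝ),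
              (b t * Complex.exp (-((ε : ℂ) * t))) • T t x)))) := by
  intro x
  exact (lhs_eq T C hTcont hC b hb ε β hε hβ hβε x).trans
    (rhs_eq T C hTsg hTcont hC b hb ε hε x).symm
end
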